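/- Let φ be a holomorphic map on a neighborhood of 0 in ℂⁿ with φ(0) = 0 and φ^k = id as germs for some k ≥ 1, and let L = dφ(0) be its linear part. Then L^k = I, and the averaging map H = (1/k) Σ_{j=0}^{k−1} L^{−j} ∘ φ^j (where φ^j is the j-th iterate of φ) satisfies H ∘ φ = L ∘ H as germs and dH(0) = id; in particular H is a germ of biholomorphism on (ℂⁿ,0) conjugating φ to its linear part L. -/

import Mathlib

noncomputable section

open Filter Function

/-- ℂⁿ as the space of functions `Fin n → ℂ`. -/
abbrev Cn (n : ℕ) : Type := Fin n → ℂ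

/-- Equality of germs at 0 of maps (ℂⁿ,0) → (ℂⁿ,0). -/
def GermEq {n : ℕ} (f g : Cn n → Cn n) : Prop := f =ᶠ[nhds 0] g

/-- Germ at 0 of a holomorphic map (ℂⁿ,0) → (ℂⁿ,0): holomorphic on a
neighborhood of 0 and sending 0 to 0. -/
def IsHoloGerm {n : ℕ} (f : Cn n → Cn n) : Prop :=
  f 0 = 0 ∧ ∀ᶠ x in nhds (0 : Cn n), AnalyticAt ℂ f x

/-- Germ of biholomorphism on (ℂⁿ,0): holomorphic germ with invertible
derivative at 0. -/
def IsBiholGerm {n : ℕ} (h : Cn n → Cn n) : Prop :=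
  IsHoloGerm h ∧ IsUnit (fderiv ℂ h 0)

/-- φ has order exactly r as a germ at 0 (φ^[r] = id as germs, r minimal). -/
def HasOrderGerm {n : ℕ} (φ : Cn n → Cn n) (r : ℕ) : Prop :=
  GermEq (φ^[r]) id ∧ ∀ m : ℕ, 0 < m → m < r → ¬ GermEq (φ^[m]) id

/-- The fixed-point set of φ near 0 is a complex submanifold of codimension 1:
locally the zero set of a holomorphic submersion F : (ℂⁿ,0) → (ℂ,0). -/
def FixIsHypersurface {n : ℕ} (φ : Cn n → Cn n) : Prop :=
  ∃ F : Cn n → ℂ, F 0 = 0 ∧ AnalyticAt ℂ F 0 ∧ fderiv ℂ F 0 ≠ 0 ∧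
    ∀ᶠ x in nhds (0 : Cn n), (φ x = x ↔ F x = 0)

/-- A reflection on (ℂⁿ,0): germ of biholomorphism of finite order ≥ 2 whose
fixed-point set is a codimension-1 complex submanifold. -/
def IsReflection {n : ℕ} (φ : Cn n → Cn n) : Prop :=
  IsBiholGerm φ ∧ (∃ r : ℕ, 2 ≤ r ∧ HasOrderGerm φ r) ∧ FixIsHypersurface φ

/-- A reflection of order exactly k. -/
def IsReflectionOfOrder {n : ℕ} (φ : Cn n → Cn n) (k : ℕ) : Prop :=
  IsBiholGerm φ ∧ HasOrderGerm φ k ∧ FixIsHypersurface φ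

/-- The canonical k-fold f₁(x) = (x₁^k, x₂, …, xₙ). -/
def canonFold (n k : ℕ) : Cn n → Cn n := fun x i => if (i : ℕ) = 0 then x i ^ k else x i

/-- The canonical reflection φ₁(x) = (λ x₁, x₂, …, xₙ) with λ = e^{2πi/k}. -/
def canonRefl (n k : ℕ) : Cn n → Cn n :=
  fun x i => if (i : ℕ) = 0 then Complex.exp (2 * (Real.pi : ℂ) * Complex.I / (k : ℂ)) * x i
    else x i

/-- f is a k-fold: a holomorphic germ 𝒜-equivalent to the canonical k-fold,
i.e. f = l ∘ f₁ ∘ h⁻¹ as germs for germs of biholomorphisms h, l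
(equivalently, f ∘ h = l ∘ f₁ as germs). -/
def IsKFold {n : ℕ} (k : ℕ) (f : Cn n → Cn n) : Prop :=
  IsHoloGerm f ∧ ∃ h l : Cn n → Cn n, IsBiholGerm h ∧ IsBiholGerm l ∧
    GermEq (f ∘ h) (l ∘ canonFold n k)

/-- The canonical k-fold in the i-th coordinate: fᵢ(x) = (x₁, …, xᵢ^k, …, xₙ). -/
def foldAt (n k : ℕ) (i : Fin n) : Cn n → Cn n := fun x j => if j = i then x j ^ k else x j

/-- averaging conjugacy: if φ^k = id as germs, then L = dφ(0)
satisfies L^k = I, and H = (1/k) Σ_{j<k} L^{−j} ∘ φ^j satisfies H ∘ φ = L ∘ H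
as germs, dH(0) = id, and H is a germ of biholomorphism. -/
theorem stmt_4 (n k : ℕ) (hk : 1 ≤ k) (φ : Cn n → Cn n)
    (hφ0 : φ 0 = 0) (hφa : ∀ᶠ x in nhds (0 : Cn n), AnalyticAt ℂ φ x)
    (hord : GermEq (φ^[k]) id) :
    (fderiv ℂ φ 0) ^ k = 1 ∧
    ∀ Linv : Cn n →L[ℂ] Cn n,
      Linv * fderiv ℂ φ 0 = 1 → fderiv ℂ φ 0 * Linv = 1 →
      ∀ H : Cn n → Cn n,
        H = (fun x => (k : ℂ)⁻¹ • ∑ j ∈ Finset.range k, (Linv ^ j) (φ^[j] x)) →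
        GermEq (H ∘ φ) (fun x => fderiv ℂ φ 0 (H x)) ∧
        fderiv ℂ H 0 = ContinuousLinearMap.id ℂ (Cn n) ∧
        IsBiholGerm H := by
  classical
  set L := fderiv ℂ φ 0 with hLdef
  have hφfix : ∀ j, φ^[j] 0 = 0 := fun j => Function.iterate_fixed hφ0 j
  have hφan : AnalyticAt ℂ φ 0 := hφa.self_of_nhds
  -- eventual analyticity of iterates
  have hiterAn : ∀ j, ∀ᶠ x in nhds (0 : Cn n), AnalyticAt ℂ (φ^[j]) x := by
    intro j
    induction j with
    | zero =>
      refine Filter.Eventually.of_forall fun x => ?_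
      rw [Function.iterate_zero]
      exact analyticAt_id
    | succ j ih =>
      have hcont : ContinuousAt (φ^[j]) 0 := (ih.self_of_nhds).continuousAt
      have h2 : ∀ᶠ y in nhds ((φ^[j]) 0), AnalyticAt ℂ φ y := by
        rw [hφfix j]; exact hφa
      have hmem : ∀ᶠ x in nhds (0 : Cn n), AnalyticAt ℂ φ ((φ^[j]) x) :=
        hcont.eventually h2
      filter_upwards [ih, hmem] with x hx1 hx2
      rw [Function.iterate_succ']
      exact hx2.comp hx1
  -- derivatives of iterates
  have hDiff : ∀ j, HasFDerivAt (φ^[j]) (L ^ j) 0 := by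
    intro j
    induction j with
    | zero =>
      rw [Function.iterate_zero, pow_zero, ContinuousLinearMap.one_def]
      exact hasFDerivAt_id 0
    | succ j ih =>
      have hφd : HasFDerivAt φ L ((φ^[j]) 0) := by
        rw [hφfix j]; exact hφan.differentiableAt.hasFDerivAt
      have hcomp := hφd.comp 0 ih
      rw [Function.iterate_succ']
      have hpow : L ^ (j + 1) = L.comp (L ^ j) := by
        rw [pow_succ']; rfl
      rw [hpow]
      exact hcomp
  have hord' : φ^[k] =ᶠ[nhds (0 : Cn n)] id := hord
  have hLk : L ^ k = 1 := by
    have h1 : fderiv ℂ (φ^[k]) 0 = fderiv ℂ (id : Cn n → Cn n) 0 := hord'.fderiv_eq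
    rw [(hDiff k).fderiv, fderiv_id] at h1
    exact h1.trans (ContinuousLinearMap.one_def).symm
  refine ⟨hLk, ?_⟩
  intro Linv hinv1 hinv2 H hH
  -- unit structure
  set u : (Cn n →L[ℂ] Cn n)ˣ := ⟨L, Linv, hinv2, hinv1⟩ with hu
  have huk : u ^ k = 1 := by
    apply Units.ext
    simpa [u, Units.val_pow_eq_pow_val] using hLk
  have hLinvk : Linv ^ k = 1 := by
    have : ((u⁻¹) ^ k : (Cn n →L[ℂ] Cn n)ˣ).val = Linv ^ k := by
      simp [u, Units.val_pow_eq_pow_val]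
    rw [← this, inv_pow, huk]
    simp
  have hLL : ∀ j, Linv ^ j * L ^ j = 1 := by
    intro j
    have : (((u⁻¹) ^ j * u ^ j : (Cn n →L[ℂ] Cn n)ˣ)).val = Linv ^ j * L ^ j := by
      simp [u, Units.val_pow_eq_pow_val]
    rw [← this, inv_pow, inv_mul_cancel]
    simp
  have hcancel : ∀ j, L * Linv ^ (j + 1) = Linv ^ j := by
    intro j
    rw [pow_succ', ← mul_assoc, hinv2, one_mul]
  have hk0 : (k : ℂ) ≠ 0 := Nat.cast_ne_zero.mpr (by omega)
  -- germ equality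
  have hgerm : GermEq (H ∘ φ) (fun x => L (H x)) := by
    have hg : ∀ᶠ x in nhds (0 : Cn n), H (φ x) = L (H x) := by
      filter_upwards [hord'] with x hx
      have hx' : φ^[k] x = x := hx
      set g : ℕ → Cn n := fun j => L ((Linv ^ j) (φ^[j] x)) with hgdef
      have hshift : ∀ j, (Linv ^ j) (φ^[j] (φ x)) = g (j + 1) := by
        intro j
        have h1 : φ^[j] (φ x) = φ^[j+1] x := (Function.iterate_succ_apply φ j x).symm
        have h2 : L ((Linv ^ (j+1)) (φ^[j+1] x)) = (L * Linv ^ (j+1)) (φ^[j+1] x) := rfl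
        rw [hgdef]
        simp only [h1, h2, hcancel j]
      have hgk : g k = g 0 := by
        simp only [hgdef, hx', hLinvk, pow_zero, Function.iterate_zero, id_eq, ContinuousLinearMap.one_apply]
      have hsum : ∑ j ∈ Finset.range k, g (j + 1) = ∑ j ∈ Finset.range k, g j := by
        have e1 := Finset.sum_range_succ' g k
        have e2 := Finset.sum_range_succ g k
        rw [e2] at e1
        -- e1 : ∑ range k g + g k = ∑ range k (g ∘ (+1)) + g 0
        rw [hgk] at e1
        exact (add_right_cancel e1.symm)
      rw [hH]
      simp only
      rw [map_smul, map_sum]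
      congr 1
      calc ∑ j ∈ Finset.range k, (Linv ^ j) (φ^[j] (φ x))
          = ∑ j ∈ Finset.range k, g (j + 1) := by
            exact Finset.sum_congr rfl fun j _ => hshift j
        _ = ∑ j ∈ Finset.range k, g j := hsum
    exact hg
  have hfder : fderiv ℂ H 0 = ContinuousLinearMap.id ℂ (Cn n) := by
    have hsummand : ∀ j, HasFDerivAt (fun x => (Linv ^ j) (φ^[j] x))
        ((Linv ^ j).comp (L ^ j)) 0 :=
      fun j => ((Linv ^ j).hasFDerivAt).comp 0 (hDiff j)
    have hsum : HasFDerivAt (fun x => ∑ j ∈ Finset.range k, (Linv ^ j) (φ^[j] x))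
        (∑ j ∈ Finset.range k, (Linv ^ j).comp (L ^ j)) 0 :=
      HasFDerivAt.fun_sum fun j _ => hsummand j
    have hHder : HasFDerivAt H
        ((k : ℂ)⁻¹ • ∑ j ∈ Finset.range k, (Linv ^ j).comp (L ^ j)) 0 := by
      rw [hH]
      exact hsum.fun_const_smul _
    have hval : ((k : ℂ)⁻¹ • ∑ j ∈ Finset.range k, (Linv ^ j).comp (L ^ j))
        = ContinuousLinearMap.id ℂ (Cn n) := by
      have h1 : ∑ j ∈ Finset.range k, (Linv ^ j).comp (L ^ j)
          = (k : ℕ) • (1 : Cn n →L[ℂ] Cn n) := by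
        rw [Finset.sum_congr rfl fun j _ => show (Linv ^ j).comp (L ^ j) = 1 from hLL j]
        simp
      rw [h1, ← Nat.cast_smul_eq_nsmul ℂ, smul_smul, inv_mul_cancel₀ hk0, one_smul]
      rfl
    rw [← hval]
    exact hHder.fderiv
  refine ⟨hgerm, hfder, ⟨?_, ?_⟩, ?_⟩
  · -- H 0 = 0
    rw [hH]
    simp [hφfix]
  · -- eventual analyticity of H
    have hall : ∀ᶠ x in nhds (0 : Cn n), ∀ j ∈ Finset.range k, AnalyticAt ℂ (φ^[j]) x :=
      (Filter.eventually_all_finset _).mpr fun j _ => hiterAn j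
    filter_upwards [hall] with x hx
    rw [hH]
    apply analyticAt_const.fun_smul
    exact Finset.analyticAt_fun_sum _ fun j hj =>
      ((Linv ^ j).analyticAt _).comp (hx j hj)
  · -- derivative invertible
    rw [hfder]
    exact isUnit_one
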